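/- Let X and Y be T1 spaces, z₀ ∈ X × Y, and suppose a sequence (zₙ) of points zₙ = (xₙ, yₙ) ∈ X × Y converges to z₀ in the cross-topology. Then there exists m ∈ ℕ such that zₙ ∈ cross(z₀) for all n ≥ m, i.e., eventually either xₙ equals the first coordinate of z₀ or yₙ equals the second coordinate of z₀. -/

import Mathlib

open Set Filter Topology

def crossOpen {X Y : Type*} [TopologicalSpace X] [TopologicalSpace Y] (A : Set (X × Y)) : Prop :=
  ∀ p ∈ A, ∃ U ∈ nhds p.1, ∃ V ∈ nhds p.2, ({p.1} ×ˢ V) ∪ (U ×ˢ {p.2}) ⊆ A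

def crossTopology (X Y : Type*) [TopologicalSpace X] [TopologicalSpace Y] :
    TopologicalSpace (X × Y) where
  IsOpen := crossOpen
  isOpen_univ := fun p _ => ⟨Set.univ, Filter.univ_mem, Set.univ, Filter.univ_mem, Set.subset_univ _⟩
  isOpen_inter := by
    rintro A B hA hB p hp
    obtain ⟨U1, hU1, V1, hV1, h1⟩ := hA p hp.1
    obtain ⟨U2, hU2, V2, hV2, h2⟩ := hB p hp.2
    refine ⟨U1 ∩ U2, Filter.inter_mem hU1 hU2, V1 ∩ V2, Filter.inter_mem hV1 hV2, ?_⟩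
    rintro q (hq | hq)
    · exact ⟨h1 (Or.inl ⟨hq.1, hq.2.1⟩), h2 (Or.inl ⟨hq.1, hq.2.2⟩)⟩
    · exact ⟨h1 (Or.inr ⟨hq.1.1, hq.2⟩), h2 (Or.inr ⟨hq.1.2, hq.2⟩)⟩
  isOpen_sUnion := by
    rintro S hS p hp
    obtain ⟨A, hAS, hpA⟩ := hp
    obtain ⟨U, hU, V, hV, h⟩ := hS A hAS p hpA
    exact ⟨U, hU, V, hV, h.trans (Set.subset_sUnion_of_mem hAS)⟩

def crossSet {X Y : Type*} (E : Set (X × Y)) : Set (X × Y) :=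
  {q | ∃ p ∈ E, q.1 = p.1 ∨ q.2 = p.2}

theorem eventually_in_cross_of_gamma_tendsto {X Y : Type*}
    [TopologicalSpace X] [TopologicalSpace Y] [T1Space X] [T1Space Y]
    (z₀ : X × Y) (z : ℕ → X × Y)
    (h : Filter.Tendsto z Filter.atTop (@nhds (X × Y) (crossTopology X Y) z₀)) :
    ∃ m : ℕ, ∀ n ≥ m, z n ∈ crossSet {z₀} := by
  by_contra hc
  push_neg at hc
  have hB : ∃ᶠ n in atTop, (z n).1 ≠ z₀.1 ∧ (z n).2 ≠ z₀.2 := by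
    rw [Filter.frequently_atTop]
    intro m
    obtain ⟨n, hn, hnz⟩ := hc m
    refine ⟨n, hn, ?_, ?_⟩
    · intro he; exact hnz ⟨z₀, rfl, Or.inl he⟩
    · intro he; exact hnz ⟨z₀, rfl, Or.inr he⟩
  have key : ∀ S : Set (X × Y), crossOpen S → z₀ ∈ S →
      (∃ᶠ n in atTop, z n ∉ S) → False := by
    intro S hSo hz hf
    have hmem : S ∈ @nhds (X × Y) (crossTopology X Y) z₀ := by
      exact @IsOpen.mem_nhds (X × Y) (crossTopology X Y) z₀ S
        (show @IsOpen _ (crossTopology X Y) S from hSo) hz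
    exact (hf.and_eventually (h hmem)).exists.elim fun n hn => hn.1 hn.2
  by_cases hA : ∃ x₁, x₁ ≠ z₀.1 ∧ ∃ᶠ n in atTop, (z n).1 = x₁ ∧ (z n).2 ≠ z₀.2
  · obtain ⟨x₁, hx₁, hf⟩ := hA
    refine key ({x₁}ᶜ ×ˢ univ) ?_ ⟨Ne.symm hx₁, trivial⟩
      (hf.mono fun n hn hm => hm.1 hn.1)
    intro p hp
    refine ⟨{x₁}ᶜ, isOpen_compl_singleton.mem_nhds hp.1, univ, univ_mem, ?_⟩
    rintro q (⟨hq1, -⟩ | ⟨hq1, -⟩)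
    · exact ⟨by rw [hq1]; exact hp.1, trivial⟩
    · exact ⟨hq1, trivial⟩
  by_cases hA' : ∃ y₁, y₁ ≠ z₀.2 ∧ ∃ᶠ n in atTop, (z n).2 = y₁ ∧ (z n).1 ≠ z₀.1
  · obtain ⟨y₁, hy₁, hf⟩ := hA'
    refine key (univ ×ˢ {y₁}ᶜ) ?_ ⟨trivial, Ne.symm hy₁⟩
      (hf.mono fun n hn hm => hm.2 hn.1)
    intro p hp
    refine ⟨univ, univ_mem, {y₁}ᶜ, isOpen_compl_singleton.mem_nhds hp.2, ?_⟩
    rintro q (⟨-, hq2⟩ | ⟨-, hq2⟩)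
    · exact ⟨trivial, hq2⟩
    · exact ⟨trivial, by rw [hq2]; exact hp.2⟩
  -- Case C
  push_neg at hA hA'
  set D : Set (X × Y) := {q | q.1 ≠ z₀.1 ∧ q.2 ≠ z₀.2 ∧ ∃ n, z n = q} with hD
  have hfinA : ∀ a : X, a ≠ z₀.1 → ({n | (z n).1 = a ∧ (z n).2 ≠ z₀.2} : Set ℕ).Finite := by
    intro a ha
    have := hA a ha
    rw [Filter.eventually_atTop] at this
    obtain ⟨N, hN⟩ := this
    refine (Set.finite_Iio N).subset fun n hn => ?_
    by_contra hlt
    exact hn.2 (hN n (le_of_not_gt hlt) hn.1)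
  have hfinB : ∀ b : Y, b ≠ z₀.2 → ({n | (z n).2 = b ∧ (z n).1 ≠ z₀.1} : Set ℕ).Finite := by
    intro b hb
    have := hA' b hb
    rw [Filter.eventually_atTop] at this
    obtain ⟨N, hN⟩ := this
    refine (Set.finite_Iio N).subset fun n hn => ?_
    by_contra hlt
    exact hn.2 (hN n (le_of_not_gt hlt) hn.1)
  refine key Dᶜ ?_ (fun hz₀ => hz₀.1 rfl) (hB.mono fun n hn hm => hm ⟨hn.1, hn.2, n, rfl⟩)
  intro p hp
  have hYfin : ({y | (p.1, y) ∈ D} : Set Y).Finite := by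
    by_cases hp1 : p.1 = z₀.1
    · convert Set.finite_empty
      ext y; simp only [Set.mem_setOf_eq, Set.mem_empty_iff_false, iff_false]
      intro hy; exact hy.1 hp1
    · refine ((hfinA p.1 hp1).image fun n => (z n).2).subset fun y hy => ?_
      obtain ⟨h1, h2, n, hzn⟩ := hy
      exact ⟨n, ⟨by rw [hzn], by rw [hzn]; exact h2⟩, by show (z n).2 = y; rw [hzn]⟩
  have hXfin : ({x | (x, p.2) ∈ D} : Set X).Finite := by
    by_cases hp2 : p.2 = z₀.2
    · convert Set.finite_empty
      ext x; simp only [Set.mem_setOf_eq, Set.mem_empty_iff_false, iff_false]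
      intro hx; exact hx.2.1 hp2
    · refine ((hfinB p.2 hp2).image fun n => (z n).1).subset fun x hx => ?_
      obtain ⟨h1, h2, n, hzn⟩ := hx
      exact ⟨n, ⟨by rw [hzn], by rw [hzn]; exact h1⟩, by show (z n).1 = x; rw [hzn]⟩
  refine ⟨{x | (x, p.2) ∈ D}ᶜ, ?_, {y | (p.1, y) ∈ D}ᶜ, ?_, ?_⟩
  · exact hXfin.isClosed.isOpen_compl.mem_nhds fun hx => hp (by simpa using hx)
  · exact hYfin.isClosed.isOpen_compl.mem_nhds fun hy => hp (by simpa using hy)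
  · rintro q (⟨hq1, hq2⟩ | ⟨hq1, hq2⟩) hqD
    · have hq1' : q.1 = p.1 := hq1
      exact hq2 (by simp only [Set.mem_setOf_eq, ← hq1', Prod.mk.eta]; exact hqD)
    · have hq2' : q.2 = p.2 := hq2
      exact hq1 (by simp only [Set.mem_setOf_eq, ← hq2', Prod.mk.eta]; exact hqD)
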